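/- Block structure of the reduced state of a gauge-invariant state: with the setup below, let ρ be a positive semidefinite operator on H with Π ρ Π = ρ. Define the matrix of the reduced state on H_r by R_{(α i k),(β j ℓ)} := Σ_{γ ∈ I} Σ_{1≤j'≤n̄_γ} Σ_{1≤m≤d_γ} ⟨(α i k) ⊗ (γ̄ j' m)| ρ |(β j ℓ) ⊗ (γ̄ j' m)⟩. Then R_{(α i k),(β j ℓ)} = 0 unless α = β and k = ℓ, and the diagonal-in-k entries R_{(α i k),(α j k)} are independent of k: R_{(α i k),(α j k)} = ρ_{αij} for every 1 ≤ k ≤ d_α, where ρ_{αij} := (1/d_α) Σ_{k=1}^{d_α} R_{(α i k),(α j k)}. -/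

import Mathlib

open Matrix
open scoped Kronecker ComplexOrder

abbrev BIdx (I : Type) (n d : I → ℕ) : Type := Σ α : I, Fin (n α) × Fin (d α)

noncomputable def Arep {G I : Type} [Group G] [Fintype I] [DecidableEq I] {d : I → ℕ}
    (n : I → ℕ) (D : ∀ α : I, G →* Matrix.unitaryGroup (Fin (d α)) ℂ) (g : G) :
    Matrix (BIdx I n d) (BIdx I n d) ℂ :=
  Matrix.blockDiagonal' fun α =>
    (1 : Matrix (Fin (n α)) (Fin (n α)) ℂ) ⊗ₖ ((D α g : Matrix (Fin (d α)) (Fin (d α)) ℂ))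

noncomputable def Abar {G I : Type} [Group G] [Fintype I] [DecidableEq I] {d : I → ℕ}
    (nbar : I → ℕ) (D : ∀ α : I, G →* Matrix.unitaryGroup (Fin (d α)) ℂ) (g : G) :
    Matrix (BIdx I nbar d) (BIdx I nbar d) ℂ :=
  Matrix.blockDiagonal' fun α =>
    (1 : Matrix (Fin (nbar α)) (Fin (nbar α)) ℂ) ⊗ₖ
      ((D α g : Matrix (Fin (d α)) (Fin (d α)) ℂ).map (starRingEnd ℂ))

noncomputable def gaugeProj {G I : Type} [Group G] [Fintype G] [Fintype I] [DecidableEq I]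
    {d : I → ℕ} (n nbar : I → ℕ) (D : ∀ α : I, G →* Matrix.unitaryGroup (Fin (d α)) ℂ) :
    Matrix (BIdx I n d × BIdx I nbar d) (BIdx I n d × BIdx I nbar d) ℂ :=
  (Fintype.card G : ℂ)⁻¹ • ∑ g : G, (Arep n D g) ⊗ₖ (Abar nbar D g)

noncomputable def Ptilde {I : Type} [DecidableEq I] (n nbar d : I → ℕ) (α : I) :
    Matrix (BIdx I n d × BIdx I nbar d) (BIdx I n d × BIdx I nbar d) ℂ :=
  (d α : ℂ)⁻¹ • ∑ i : Fin (n α), ∑ j : Fin (nbar α), ∑ k : Fin (d α), ∑ l : Fin (d α),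
    Matrix.single (⟨α, (i, k)⟩, ⟨α, (j, k)⟩) (⟨α, (i, l)⟩, ⟨α, (j, l)⟩) 1

noncomputable def AtildeR {G I : Type} [Group G] [Fintype G] [Fintype I] [DecidableEq I]
    {d : I → ℕ} (n nbar : I → ℕ) (D : ∀ α : I, G →* Matrix.unitaryGroup (Fin (d α)) ℂ) :
    Set (Matrix (BIdx I n d × BIdx I nbar d) (BIdx I n d × BIdx I nbar d) ℂ) :=
  { T | ∃ O : Matrix (BIdx I n d) (BIdx I n d) ℂ,
      T = gaugeProj n nbar D * (O ⊗ₖ (1 : Matrix (BIdx I nbar d) (BIdx I nbar d) ℂ)) *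
        gaugeProj n nbar D }

noncomputable def AtildeRbar {G I : Type} [Group G] [Fintype G] [Fintype I] [DecidableEq I]
    {d : I → ℕ} (n nbar : I → ℕ) (D : ∀ α : I, G →* Matrix.unitaryGroup (Fin (d α)) ℂ) :
    Set (Matrix (BIdx I n d × BIdx I nbar d) (BIdx I n d × BIdx I nbar d) ℂ) :=
  { T | ∃ O : Matrix (BIdx I nbar d) (BIdx I nbar d) ℂ,
      T = gaugeProj n nbar D * ((1 : Matrix (BIdx I n d) (BIdx I n d) ℂ) ⊗ₖ O) *
        gaugeProj n nbar D }

noncomputable def tauTr {I : Type} [Fintype I] [DecidableEq I] (n nbar d : I → ℕ)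
    (T : Matrix (BIdx I n d × BIdx I nbar d) (BIdx I n d × BIdx I nbar d) ℂ) : ℂ :=
  ∑ α ∈ Finset.univ.filter (fun α => 1 ≤ nbar α),
    ((nbar α : ℂ))⁻¹ * (Ptilde n nbar d α * T).trace

section auxlemmas

set_option linter.unusedSectionVars false

variable {G I : Type} [Group G] [Fintype G] [Fintype I] [DecidableEq I] {d : I → ℕ}
variable (n nbar : I → ℕ) (D : ∀ α : I, G →* Matrix.unitaryGroup (Fin (d α)) ℂ)

lemma Arep_mul (g h : G) : Arep n D g * Arep n D h = Arep n D (g * h) := by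
  unfold Arep
  rw [← Matrix.blockDiagonal'_mul]
  refine congrArg _ (funext fun α => ?_)
  rw [← Matrix.mul_kronecker_mul, Matrix.one_mul,
    show ((D α (g * h) : Matrix (Fin (d α)) (Fin (d α)) ℂ))
      = (D α g : Matrix (Fin (d α)) (Fin (d α)) ℂ) * (D α h : Matrix (Fin (d α)) (Fin (d α)) ℂ) by
      rw [_root_.map_mul]; norm_cast]

lemma Arep_one : Arep n D (1 : G) = (1 : Matrix (BIdx I n d) (BIdx I n d) ℂ) := by
  unfold Arep
  rw [← Matrix.blockDiagonal'_one]
  refine congrArg _ (funext fun α => ?_)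
  rw [_root_.map_one]
  show (1 : Matrix (Fin (n α)) (Fin (n α)) ℂ) ⊗ₖ
      ((1 : Matrix.unitaryGroup (Fin (d α)) ℂ) : Matrix (Fin (d α)) (Fin (d α)) ℂ) = _
  norm_cast
  rw [Matrix.one_kronecker_one]
  rfl

lemma Abar_mul (g h : G) : Abar nbar D g * Abar nbar D h = Abar nbar D (g * h) := by
  unfold Abar
  rw [← Matrix.blockDiagonal'_mul]
  refine congrArg _ (funext fun α => ?_)
  rw [← Matrix.mul_kronecker_mul, Matrix.one_mul, ← Matrix.map_mul,
    show ((D α g : Matrix (Fin (d α)) (Fin (d α)) ℂ)) * (D α h : Matrix (Fin (d α)) (Fin (d α)) ℂ)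
      = (D α (g * h) : Matrix (Fin (d α)) (Fin (d α)) ℂ) by
      rw [_root_.map_mul]; norm_cast]

lemma Abar_one : Abar nbar D (1 : G) = (1 : Matrix (BIdx I nbar d) (BIdx I nbar d) ℂ) := by
  unfold Abar
  rw [← Matrix.blockDiagonal'_one]
  refine congrArg _ (funext fun α => ?_)
  rw [_root_.map_one]
  have h1 : (((1 : Matrix.unitaryGroup (Fin (d α)) ℂ) : Matrix (Fin (d α)) (Fin (d α)) ℂ)).map
      (starRingEnd ℂ) = (1 : Matrix (Fin (d α)) (Fin (d α)) ℂ) := by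
    rw [show ((1 : Matrix.unitaryGroup (Fin (d α)) ℂ) : Matrix (Fin (d α)) (Fin (d α)) ℂ)
        = (1 : Matrix (Fin (d α)) (Fin (d α)) ℂ) from rfl]
    exact Matrix.map_one _ (map_zero _) (map_one _)
  rw [h1, Matrix.one_kronecker_one]
  rfl

lemma Arep_apply_same (g : G) (α : I) (i i' : Fin (n α)) (k k' : Fin (d α)) :
    Arep n D g ⟨α, (i, k)⟩ ⟨α, (i', k')⟩
      = (if i = i' then 1 else 0) * (D α g : Matrix (Fin (d α)) (Fin (d α)) ℂ) k k' := by
  simp [Arep, Matrix.blockDiagonal'_apply_eq, Matrix.one_apply]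

lemma Arep_apply_ne (g : G) {α β : I} (h : α ≠ β) (x : Fin (n α) × Fin (d α))
    (y : Fin (n β) × Fin (d β)) : Arep n D g ⟨α, x⟩ ⟨β, y⟩ = 0 :=
  Matrix.blockDiagonal'_apply_ne _ _ _ h

end auxlemmas

section ptrlemmas

noncomputable def ptr {P W : Type} [Fintype W] (M : Matrix (P × W) (P × W) ℂ) : Matrix P P ℂ :=
  Matrix.of fun p q => ∑ w, M (p, w) (q, w)

variable {P W : Type} [Fintype P] [Fintype W] [DecidableEq P] [DecidableEq W]

set_option linter.unusedSectionVars false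

lemma ptr_left (A : Matrix P P ℂ) (M : Matrix (P × W) (P × W) ℂ) :
    ptr ((A ⊗ₖ (1 : Matrix W W ℂ)) * M) = A * ptr M := by
  ext p q
  simp only [ptr, Matrix.of_apply, Matrix.mul_apply, Fintype.sum_prod_type,
    Matrix.kroneckerMap_apply, Matrix.one_apply, mul_ite, mul_one, mul_zero, ite_mul, zero_mul,
    Finset.sum_ite_eq, Finset.mem_univ, if_true, Finset.mul_sum]
  exact Finset.sum_comm

lemma ptr_right (A : Matrix P P ℂ) (M : Matrix (P × W) (P × W) ℂ) :
    ptr (M * (A ⊗ₖ (1 : Matrix W W ℂ))) = ptr M * A := by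
  ext p q
  simp only [ptr, Matrix.of_apply, Matrix.mul_apply, Fintype.sum_prod_type,
    Matrix.kroneckerMap_apply, Matrix.one_apply, mul_ite, mul_one, mul_zero, ite_mul, zero_mul,
    Finset.sum_ite_eq, Finset.mem_univ, if_true, Finset.sum_mul]
  rw [Finset.sum_comm]
  refine Finset.sum_congr rfl fun w _ => ?_
  refine Finset.sum_congr rfl fun p' _ => ?_
  simp [Finset.sum_ite_eq', mul_comm]

lemma ptr_cyc (B : Matrix W W ℂ) (M : Matrix (P × W) (P × W) ℂ) :
    ptr (((1 : Matrix P P ℂ) ⊗ₖ B) * M) = ptr (M * ((1 : Matrix P P ℂ) ⊗ₖ B)) := by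
  ext p q
  simp only [ptr, Matrix.of_apply, Matrix.mul_apply, Fintype.sum_prod_type,
    Matrix.kroneckerMap_apply, Matrix.one_apply, mul_ite, mul_one, mul_zero, ite_mul, zero_mul,
    one_mul, Finset.sum_ite_irrel, Finset.sum_const_zero, Finset.sum_ite_eq, Finset.sum_ite_eq',
    Finset.mem_univ, if_true]
  rw [Finset.sum_comm]
  refine Finset.sum_congr rfl fun w _ => Finset.sum_congr rfl fun w' _ => ?_
  ring

end ptrlemmas

lemma schur_aux {G : Type} [Group G] {m : ℕ} (hm : 1 ≤ m) (Dm : G → Matrix (Fin m) (Fin m) ℂ)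
    (hirr : ∀ (W : Submodule ℂ (Fin m → ℂ)),
      (∀ g : G, ∀ x ∈ W, Dm g *ᵥ x ∈ W) → W = ⊥ ∨ W = ⊤)
    (F : Matrix (Fin m) (Fin m) ℂ) (hF : ∀ g, Dm g * F = F * Dm g) :
    ∃ c : ℂ, F = c • (1 : Matrix (Fin m) (Fin m) ℂ) := by
  haveI : Nonempty (Fin m) := ⟨⟨0, hm⟩⟩
  obtain ⟨c, hc⟩ := Module.End.exists_eigenvalue (Matrix.mulVecLin F)
  set Wc := Module.End.eigenspace (Matrix.mulVecLin F) c with hWc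
  have hWinv : ∀ g : G, ∀ x ∈ Wc, Dm g *ᵥ x ∈ Wc := by
    intro g x hx
    rw [hWc, Module.End.mem_eigenspace_iff] at hx ⊢
    simp only [Matrix.mulVecLin_apply] at hx ⊢
    rw [Matrix.mulVec_mulVec, ← hF g, ← Matrix.mulVec_mulVec, hx, Matrix.mulVec_smul]
  rcases hirr Wc hWinv with h | h
  · exact absurd h hc
  · refine ⟨c, ?_⟩
    ext k l
    have hx : F *ᵥ (Pi.single l 1 : Fin m → ℂ) = c • (Pi.single l 1 : Fin m → ℂ) := by
      have h2 : (Pi.single l 1 : Fin m → ℂ) ∈ Wc := by rw [h]; trivial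
      rw [hWc, Module.End.mem_eigenspace_iff] at h2
      simpa using h2
    have := congrFun hx k
    simpa [Matrix.mulVec_single, Matrix.one_apply, Pi.single_apply, mul_comm] using this

section mainlemmas

set_option linter.unusedSectionVars false

variable {G I : Type} [Group G] [Fintype G] [Fintype I] [DecidableEq I] {d : I → ℕ}
variable (n nbar : I → ℕ) (D : ∀ α : I, G →* Matrix.unitaryGroup (Fin (d α)) ℂ)

lemma U_mul (g h : G) :
    (Arep n D g ⊗ₖ Abar nbar D g) * (Arep n D h ⊗ₖ Abar nbar D h)
      = Arep n D (g * h) ⊗ₖ Abar nbar D (g * h) := by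
  rw [← Matrix.mul_kronecker_mul, Arep_mul, Abar_mul]

lemma U_proj (g : G) :
    (Arep n D g ⊗ₖ Abar nbar D g) * gaugeProj n nbar D = gaugeProj n nbar D := by
  unfold gaugeProj
  rw [Matrix.mul_smul, Finset.mul_sum]
  refine congrArg _ ?_
  calc ∑ h : G, (Arep n D g ⊗ₖ Abar nbar D g) * (Arep n D h ⊗ₖ Abar nbar D h)
      = ∑ h : G, Arep n D (g * h) ⊗ₖ Abar nbar D (g * h) :=
        Finset.sum_congr rfl fun h _ => U_mul n nbar D g h
    _ = ∑ h : G, Arep n D h ⊗ₖ Abar nbar D h :=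
        Fintype.sum_bijective (fun h : G => g * h) (Group.mulLeft_bijective g) _ _ fun h => rfl

lemma proj_U (g : G) :
    gaugeProj n nbar D * (Arep n D g ⊗ₖ Abar nbar D g) = gaugeProj n nbar D := by
  unfold gaugeProj
  rw [Matrix.smul_mul, Finset.sum_mul]
  refine congrArg _ ?_
  calc ∑ h : G, (Arep n D h ⊗ₖ Abar nbar D h) * (Arep n D g ⊗ₖ Abar nbar D g)
      = ∑ h : G, Arep n D (h * g) ⊗ₖ Abar nbar D (h * g) :=
        Finset.sum_congr rfl fun h _ => U_mul n nbar D h g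
    _ = ∑ h : G, Arep n D h ⊗ₖ Abar nbar D h :=
        Fintype.sum_bijective (fun h : G => h * g) (Group.mulRight_bijective g) _ _ fun h => rfl

lemma comm_block (R : Matrix (BIdx I n d) (BIdx I n d) ℂ)
    (hcomm : ∀ g : G, Arep n D g * R = R * Arep n D g)
    (α β : I) (i : Fin (n α)) (j : Fin (n β)) (g : G) :
    (D α g : Matrix (Fin (d α)) (Fin (d α)) ℂ) *
      (Matrix.of fun k l => R ⟨α, (i, k)⟩ ⟨β, (j, l)⟩)
    = (Matrix.of fun k l => R ⟨α, (i, k)⟩ ⟨β, (j, l)⟩) *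
      (D β g : Matrix (Fin (d β)) (Fin (d β)) ℂ) := by
  ext k l
  have h := congrFun (congrFun (hcomm g) ⟨α, (i, k)⟩) ⟨β, (j, l)⟩
  have hL : (Arep n D g * R) ⟨α, (i, k)⟩ ⟨β, (j, l)⟩
      = ∑ k' : Fin (d α),
          (D α g : Matrix (Fin (d α)) (Fin (d α)) ℂ) k k' * R ⟨α, (i, k')⟩ ⟨β, (j, l)⟩ := by
    rw [Matrix.mul_apply, ← Finset.univ_sigma_univ, Finset.sum_sigma]
    rw [Finset.sum_eq_single α
      (fun γ _ hγ => Finset.sum_eq_zero fun y _ => by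
        rw [Arep_apply_ne n D g (Ne.symm hγ), zero_mul])
      (fun hα => absurd (Finset.mem_univ α) hα)]
    simp [Arep_apply_same, Fintype.sum_prod_type, ite_mul, one_mul, zero_mul,
      Finset.sum_ite_irrel, Finset.sum_const_zero, Finset.sum_ite_eq, mul_assoc]
  have hR : (R * Arep n D g) ⟨α, (i, k)⟩ ⟨β, (j, l)⟩
      = ∑ l' : Fin (d β),
          R ⟨α, (i, k)⟩ ⟨β, (j, l')⟩ * (D β g : Matrix (Fin (d β)) (Fin (d β)) ℂ) l' l := by
    rw [Matrix.mul_apply, ← Finset.univ_sigma_univ, Finset.sum_sigma]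
    rw [Finset.sum_eq_single β
      (fun γ _ hγ => Finset.sum_eq_zero fun y _ => by
        rw [Arep_apply_ne n D g hγ, mul_zero])
      (fun hβ => absurd (Finset.mem_univ β) hβ)]
    simp [Arep_apply_same, Fintype.sum_prod_type, mul_ite, mul_one, mul_zero, ite_mul, one_mul,
      zero_mul, mul_comm, Finset.sum_ite_irrel, Finset.sum_const_zero, Finset.sum_ite_eq',
      ← mul_assoc]
  rw [hL, hR] at h
  simpa [Matrix.mul_apply] using h

end mainlemmas

/-- block structure of the reduced state of a gauge-invariant state:
the partial trace `R` over `H_r̄` of a positive semidefinite `ρ` with `Π ρ Π = ρ`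
vanishes off the diagonal in the sector label and in the irrep index `k`, and its
diagonal-in-`k` entries are independent of `k`. -/
theorem stmt11 (G I : Type) [Group G] [Fintype G] [Fintype I] [DecidableEq I]
    (d : I → ℕ) (hd : ∀ α, 1 ≤ d α)
    (D : ∀ α : I, G →* Matrix.unitaryGroup (Fin (d α)) ℂ)
    (hirr : ∀ α (W : Submodule ℂ (Fin (d α) → ℂ)),
      (∀ g : G, ∀ x ∈ W, (D α g : Matrix (Fin (d α)) (Fin (d α)) ℂ) *ᵥ x ∈ W) →
      W = ⊥ ∨ W = ⊤)
    (hnoniso : ∀ α β, α ≠ β → ∀ F : Matrix (Fin (d α)) (Fin (d β)) ℂ,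
      (∀ g : G, (D α g : Matrix (Fin (d α)) (Fin (d α)) ℂ) * F
          = F * (D β g : Matrix (Fin (d β)) (Fin (d β)) ℂ)) → F = 0)
    (n nbar : I → ℕ)
    (ρ : Matrix (BIdx I n d × BIdx I nbar d) (BIdx I n d × BIdx I nbar d) ℂ)
    (hpos : ρ.PosSemidef)
    (hinv : gaugeProj n nbar D * ρ * gaugeProj n nbar D = ρ) :
    letI R : Matrix (BIdx I n d) (BIdx I n d) ℂ :=
      fun p q => ∑ w : BIdx I nbar d, ρ (p, w) (q, w)
    -- vanishing across distinct sectors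
    (∀ α β : I, α ≠ β → ∀ (i : Fin (n α)) (k : Fin (d α)) (j : Fin (n β)) (l : Fin (d β)),
      R ⟨α, (i, k)⟩ ⟨β, (j, l)⟩ = 0) ∧
    -- vanishing off the diagonal in k within a sector
    (∀ (α : I) (i j : Fin (n α)) (k l : Fin (d α)), k ≠ l →
      R ⟨α, (i, k)⟩ ⟨α, (j, l)⟩ = 0) ∧
    -- the diagonal-in-k entries are independent of k
    (∀ (α : I) (i j : Fin (n α)) (k : Fin (d α)),
      R ⟨α, (i, k)⟩ ⟨α, (j, k)⟩
        = (d α : ℂ)⁻¹ * ∑ k' : Fin (d α), R ⟨α, (i, k')⟩ ⟨α, (j, k')⟩) := by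
  classical
  have hρconj : ∀ g : G, (Arep n D g ⊗ₖ Abar nbar D g) * ρ *
      (Arep n D g⁻¹ ⊗ₖ Abar nbar D g⁻¹) = ρ := by
    intro g
    conv_lhs => rw [← hinv]
    rw [← Matrix.mul_assoc, ← Matrix.mul_assoc, U_proj, Matrix.mul_assoc, Matrix.mul_assoc,
      proj_U, ← Matrix.mul_assoc, hinv]
  have hRconj : ∀ g : G, ptr ρ = Arep n D g * ptr ρ * Arep n D g⁻¹ := by
    intro g
    have key := hρconj g
    rw [show (Arep n D g ⊗ₖ Abar nbar D g)
        = (Arep n D g ⊗ₖ (1 : Matrix (BIdx I nbar d) (BIdx I nbar d) ℂ)) *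
          ((1 : Matrix (BIdx I n d) (BIdx I n d) ℂ) ⊗ₖ Abar nbar D g) by
        rw [← Matrix.mul_kronecker_mul, Matrix.mul_one, Matrix.one_mul],
      show (Arep n D g⁻¹ ⊗ₖ Abar nbar D g⁻¹)
        = ((1 : Matrix (BIdx I n d) (BIdx I n d) ℂ) ⊗ₖ Abar nbar D g⁻¹) *
          (Arep n D g⁻¹ ⊗ₖ (1 : Matrix (BIdx I nbar d) (BIdx I nbar d) ℂ)) by
        rw [← Matrix.mul_kronecker_mul, Matrix.mul_one, Matrix.one_mul]] at key
    have key2 : (Arep n D g ⊗ₖ (1 : Matrix (BIdx I nbar d) (BIdx I nbar d) ℂ)) *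
        (((1 : Matrix (BIdx I n d) (BIdx I n d) ℂ) ⊗ₖ Abar nbar D g) * ρ *
          ((1 : Matrix (BIdx I n d) (BIdx I n d) ℂ) ⊗ₖ Abar nbar D g⁻¹)) *
        (Arep n D g⁻¹ ⊗ₖ (1 : Matrix (BIdx I nbar d) (BIdx I nbar d) ℂ)) = ρ :=
      Eq.trans (by simp only [Matrix.mul_assoc]) key
    have hmid : ptr (((1 : Matrix (BIdx I n d) (BIdx I n d) ℂ) ⊗ₖ Abar nbar D g) * ρ *
        ((1 : Matrix (BIdx I n d) (BIdx I n d) ℂ) ⊗ₖ Abar nbar D g⁻¹)) = ptr ρ := by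
      rw [Matrix.mul_assoc, ptr_cyc, Matrix.mul_assoc, ← Matrix.mul_kronecker_mul,
        Matrix.one_mul, Abar_mul, inv_mul_cancel, Abar_one, Matrix.one_kronecker_one,
        Matrix.mul_one]
    calc ptr ρ
        = ptr ((Arep n D g ⊗ₖ (1 : Matrix (BIdx I nbar d) (BIdx I nbar d) ℂ)) *
            (((1 : Matrix (BIdx I n d) (BIdx I n d) ℂ) ⊗ₖ Abar nbar D g) * ρ *
              ((1 : Matrix (BIdx I n d) (BIdx I n d) ℂ) ⊗ₖ Abar nbar D g⁻¹)) *
            (Arep n D g⁻¹ ⊗ₖ (1 : Matrix (BIdx I nbar d) (BIdx I nbar d) ℂ))) := by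
          rw [key2]
      _ = Arep n D g * ptr ρ * Arep n D g⁻¹ := by
          rw [ptr_right, ptr_left, hmid]
  have hcomm : ∀ g : G, Arep n D g * ptr ρ = ptr ρ * Arep n D g := by
    intro g
    conv_rhs => rw [hRconj g]
    rw [Matrix.mul_assoc (Arep n D g * ptr ρ), Arep_mul, inv_mul_cancel, Arep_one,
      Matrix.mul_one]
  refine ⟨?_, ?_, ?_⟩
  · intro α β hne i k j l
    have h0 := hnoniso α β hne
      (Matrix.of fun k l => ptr ρ ⟨α, (i, k)⟩ ⟨β, (j, l)⟩)
      (fun g => comm_block n D (ptr ρ) hcomm α β i j g)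
    exact congrFun (congrFun h0 k) l
  · intro α i j k l hkl
    obtain ⟨c, hcF⟩ := schur_aux (hd α) (fun g => (D α g : Matrix (Fin (d α)) (Fin (d α)) ℂ))
      (hirr α) (Matrix.of fun k l => ptr ρ ⟨α, (i, k)⟩ ⟨α, (j, l)⟩)
      (fun g => comm_block n D (ptr ρ) hcomm α α i j g)
    have := congrFun (congrFun hcF k) l
    have h2 : ptr ρ ⟨α, (i, k)⟩ ⟨α, (j, l)⟩ = 0 := by simpa [Matrix.one_apply, hkl] using this
    exact h2
  · intro α i j k
    obtain ⟨c, hcF⟩ := schur_aux (hd α) (fun g => (D α g : Matrix (Fin (d α)) (Fin (d α)) ℂ))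
      (hirr α) (Matrix.of fun k l => ptr ρ ⟨α, (i, k)⟩ ⟨α, (j, l)⟩)
      (fun g => comm_block n D (ptr ρ) hcomm α α i j g)
    have hdiag : ∀ k' : Fin (d α), ptr ρ ⟨α, (i, k')⟩ ⟨α, (j, k')⟩ = c := by
      intro k'
      have := congrFun (congrFun hcF k') k'
      simpa [Matrix.one_apply] using this
    have hne0 : (d α : ℂ) ≠ 0 := by
      exact_mod_cast Nat.cast_ne_zero.mpr (Nat.one_le_iff_ne_zero.mp (hd α))
    calc (∑ w : BIdx I nbar d, ρ (⟨α, (i, k)⟩, w) (⟨α, (j, k)⟩, w))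
        = c := hdiag k
      _ = (d α : ℂ)⁻¹ * ∑ k' : Fin (d α), ptr ρ ⟨α, (i, k')⟩ ⟨α, (j, k')⟩ := by
          rw [Finset.sum_congr rfl fun k' _ => hdiag k']
          simp [Finset.sum_const, Finset.card_univ]
          field_simp
      _ = (d α : ℂ)⁻¹ * ∑ k' : Fin (d α),
            ∑ w : BIdx I nbar d, ρ (⟨α, (i, k')⟩, w) (⟨α, (j, k')⟩, w) := rfl
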